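/- The need-adjusted serial rule satisfies lowest rank consistency: for m ≥ 2, removing agent 1 after awarding him φ^s_1(M,r,z) = z_1 + (r_1 - z_1)/m and setting agent 2's new revenue to r_2 + r_1 - φ^s_1(M,r,z), the serial rule applied to the reduced (m-1)-agent problem gives each agent i ∈ {2,...,m} the same amount as in the original problem. -/

import Mathlib

/-- The need-adjusted serial rule on the hierarchy `{0, ..., m-1}`
(agent `m-1` is the top-ranked agent): each agent keeps his need and shares
his surplus equally with himself and all his superiors. -/
noncomputable def serialRule (m : ℕ) (r z : ℕ → ℝ) (i : ℕ) : ℝ :=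
  z i + ∑ j ∈ Finset.range (i + 1), (r j - z j) / ((m - j : ℕ) : ℝ)
theorem serial_rule_lowest_rank_consistency
    (m : ℕ) (hm : 2 ≤ m) (r z : ℕ → ℝ)
    (hval : ∀ i < m, 0 ≤ z i ∧ z i ≤ r i) :
    serialRule m r z 0 = z 0 + (r 0 - z 0) / (m : ℝ) ∧
    ∀ i, 1 ≤ i → i < m →
      serialRule m r z i =
        serialRule (m - 1)
          (fun j => if j = 0 then r 1 + r 0 - serialRule m r z 0 else r (j + 1))
          (fun j => z (j + 1)) (i - 1) := by
  have h0 : serialRule m r z 0 = z 0 + (r 0 - z 0) / (m : ℝ) := by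
    simp [serialRule]
  refine ⟨h0, ?_⟩
  intro i hi1 him
  obtain ⟨k, rfl⟩ : ∃ k, i = k + 1 := ⟨i - 1, (Nat.succ_pred_eq_of_pos hi1).symm⟩
  have hm1cast : ((m - 1 : ℕ) : ℝ) = (m : ℝ) - 1 := by
    push_cast [Nat.cast_sub (by omega : 1 ≤ m)]; ring
  have hmne : (m : ℝ) ≠ 0 := by positivity
  have hm1ne : (m : ℝ) - 1 ≠ 0 := by
    have : (2 : ℝ) ≤ (m : ℝ) := by exact_mod_cast hm
    linarith
  set s0 := serialRule m r z 0 with hs0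
  simp only [serialRule, Nat.add_sub_cancel]
  rw [Finset.sum_range_succ', Finset.sum_range_succ', Finset.sum_range_succ']
  have hterm : ∀ j ∈ Finset.range k,
      ((if j + 1 = 0 then r 1 + r 0 - s0 else r (j + 1 + 1))
        - z (j + 1 + 1)) / ((m - 1 - (j + 1) : ℕ) : ℝ)
      = (r (j + 1 + 1) - z (j + 1 + 1)) / ((m - (j + 1 + 1) : ℕ) : ℝ) := by
    intro j _
    have : m - 1 - (j + 1) = m - (j + 1 + 1) := by omega
    simp [this]
  rw [Finset.sum_congr rfl hterm]
  have hd0 : ((m - 0 : ℕ) : ℝ) = (m : ℝ) := by norm_num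
  have hd1 : ((m - 1 - 0 : ℕ) : ℝ) = (m : ℝ) - 1 := by
    simpa using hm1cast
  have hdm1 : ((m - 1 : ℕ) : ℝ) = (m : ℝ) - 1 := hm1cast
  simp only [h0, hd0, hd1, hdm1, if_pos rfl, if_neg (Nat.succ_ne_zero 0), ↓reduceIte]
  field_simp
  ring
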